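/- Let p > 2, let 𝒫 = {(P^i, W^i) : i ∈ K} be a family of partition–weight pairs on a countable set A, and let X = X(𝒫). Suppose R : X → L_p([0,1]) is a bounded linear map and c₀ > 0 satisfies ‖Rx‖_{L_p} ≥ c₀‖x‖_X for all x ∈ X. Then there exists a constant C > 0, depending only on ‖R‖/c₀, such that for every partition Q of A and every map T : Q → 𝒫, one has ‖x‖_X ≥ C ‖x‖_{P(Q,T),W(Q,T)} for all x ∈ X. -/

import Mathlib

open scoped ENNReal
open MeasureTheory Filter

noncomputable section

variable {α : Type*}

/-- `P` is a partition of the type `α`: a collection of pairwise disjoint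
nonempty subsets of `α` whose union is all of `α`. -/
def IsPartition (P : Set (Set α)) : Prop :=
  (∀ N ∈ P, N.Nonempty) ∧ P.PairwiseDisjoint id ∧ ⋃₀ P = Set.univ

/-- A weight function takes values in `(0,1]`. -/
def IsWeight (W : α → ℝ) : Prop := ∀ a, W a ∈ Set.Ioc (0 : ℝ) 1

/-- `‖x‖_{P,W} = (Σ_{N∈P} (Σ_{j∈N} x_j² w_j²)^{p/2})^{1/p}`, valued in `[0,∞]`. -/
def pwNorm (p : ℝ) (P : Set (Set α)) (W : α → ℝ) (x : α → ℝ) : ℝ≥0∞ :=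
  (∑' N : P, (∑' j : N.1, ENNReal.ofReal ((x j.1) ^ 2 * (W j.1) ^ 2)) ^ (p / 2)) ^ (1 / p)

/-- A partition–weight pair on `α`. -/
abbrev PWPair (α : Type*) := Set (Set α) × (α → ℝ)

/-- Every member of the family is a genuine partition–weight pair. -/
def IsPWFamily (𝒞 : Set (PWPair α)) : Prop :=
  ∀ PW ∈ 𝒞, IsPartition PW.1 ∧ IsWeight PW.2

/-- `‖x‖_𝒞 = sup_{(P,W) ∈ 𝒞} ‖x‖_{P,W}`. -/
def famNorm (p : ℝ) (𝒞 : Set (PWPair α)) (x : α → ℝ) : ℝ≥0∞ :=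
  ⨆ PW ∈ 𝒞, pwNorm p PW.1 PW.2 x

/-- The block of the partition `Q` containing `b` (for a genuine partition this is
the unique element of `Q` containing `b`). -/
def blockOf (Q : Set (Set α)) (b : α) : Set α := ⋃₀ {q ∈ Q | b ∈ q}

/-- The partition `P(Q,T)` obtained from a partition `Q` and a choice `T` of a
partition–weight pair for each block of `Q`. -/
def envPartition (Q : Set (Set α)) (T : Set α → PWPair α) : Set (Set α) :=
  {K | K.Nonempty ∧ ∃ q ∈ Q, ∃ s ∈ (T q).1, K = q ∩ s}

/-- The weight `W(Q,T)`: on the block `q` of `Q` it is the weight chosen by `T q`. -/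
def envWeight (Q : Set (Set α)) (T : Set α → PWPair α) : α → ℝ :=
  fun b => (T (blockOf Q b)).2 b

/-- A family of partition–weight pairs satisfies the envelope property if it is
closed under the operation `(Q, T) ↦ (P(Q,T), W(Q,T))`. -/
def EnvelopeProp (𝒞 : Set (PWPair α)) : Prop :=
  ∀ Q : Set (Set α), IsPartition Q → ∀ T : Set α → PWPair α, (∀ q ∈ Q, T q ∈ 𝒞) →
    (envPartition Q T, envWeight Q T) ∈ 𝒞

/-- The family `𝒞̃` of all pairs `(P(Q,T), W(Q,T))`. -/
def envFam (𝒞 : Set (PWPair α)) : Set (PWPair α) :=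
  {PW | ∃ Q T, IsPartition Q ∧ (∀ q ∈ Q, T q ∈ 𝒞) ∧
    PW = (envPartition Q T, envWeight Q T)}

/-- The envelope norm generated by `𝒞`. -/
def envNorm (p : ℝ) (𝒞 : Set (PWPair α)) (x : α → ℝ) : ℝ≥0∞ := famNorm p (envFam 𝒞) x


/-! ### Auxiliary lemmas -/

lemma my_pwNorm_rpow {p : ℝ} (hp : 0 < p) (P : Set (Set α)) (W : α → ℝ) (x : α → ℝ) :
    (pwNorm p P W x) ^ p
      = ∑' N : P, (∑' j : N.1, ENNReal.ofReal ((x j.1) ^ 2 * (W j.1) ^ 2)) ^ (p / 2) := by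
  rw [pwNorm, ← ENNReal.rpow_mul, one_div, inv_mul_cancel₀ hp.ne', ENNReal.rpow_one]

lemma my_pwNorm_mono_sq {p : ℝ} (hp : 0 < p) (P : Set (Set α)) (W : α → ℝ) {x y : α → ℝ}
    (h : ∀ j, x j ^ 2 ≤ y j ^ 2) : pwNorm p P W x ≤ pwNorm p P W y := by
  refine ENNReal.rpow_le_rpow ?_ (by positivity)
  refine ENNReal.tsum_le_tsum fun N => ?_
  refine ENNReal.rpow_le_rpow ?_ (by positivity)
  refine ENNReal.tsum_le_tsum fun j => ?_
  exact ENNReal.ofReal_le_ofReal (mul_le_mul_of_nonneg_right (h j) (sq_nonneg _))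

lemma my_famNorm_mono_sq {p : ℝ} (hp : 0 < p) (𝒞 : Set (PWPair α)) {x y : α → ℝ}
    (h : ∀ j, x j ^ 2 ≤ y j ^ 2) : famNorm p 𝒞 x ≤ famNorm p 𝒞 y :=
  iSup₂_mono fun PW _ => my_pwNorm_mono_sq hp PW.1 PW.2 h

lemma my_famNorm_congr_sq {p : ℝ} (hp : 0 < p) (𝒞 : Set (PWPair α)) {x y : α → ℝ}
    (h : ∀ j, x j ^ 2 = y j ^ 2) : famNorm p 𝒞 x = famNorm p 𝒞 y :=
  le_antisymm (my_famNorm_mono_sq hp 𝒞 fun j => (h j).le)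
    (my_famNorm_mono_sq hp 𝒞 fun j => (h j).ge)

lemma my_pwNorm_le_famNorm {p : ℝ} {𝒞 : Set (PWPair α)} {PW : PWPair α} (hPW : PW ∈ 𝒞)
    (x : α → ℝ) : pwNorm p PW.1 PW.2 x ≤ famNorm p 𝒞 x :=
  le_iSup₂_of_le PW hPW le_rfl

lemma IsPartition.eq_of_mem' {Q : Set (Set α)} (hQ : IsPartition Q) {q q' : Set α}
    (hq : q ∈ Q) (hq' : q' ∈ Q) {j : α} (hj : j ∈ q) (hj' : j ∈ q') : q = q' := by
  by_contra h
  exact absurd hj' (Set.disjoint_left.mp (hQ.2.1 hq hq' h) hj)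

lemma my_blockOf_eq {Q : Set (Set α)} (hQ : IsPartition Q) {q : Set α} (hq : q ∈ Q) {j : α}
    (hj : j ∈ q) : blockOf Q j = q := by
  apply Set.eq_of_subset_of_subset
  · rintro a ⟨t, ⟨htQ, hjt⟩, hat⟩
    rwa [hQ.eq_of_mem' htQ hq hjt hj] at hat
  · exact fun a ha => ⟨q, ⟨hq, hj⟩, ha⟩

lemma my_key_pt {r : ℝ} (hr : 1 ≤ r) (u v U V : ℝ≥0∞) (hUV : U + V = 2 * (u + v)) :
    2 * (u ^ r + v ^ r) ≤ U ^ r + V ^ r := by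
  have hr0 : (0:ℝ) < r := lt_of_lt_of_le one_pos hr
  have h1 : u ^ r + v ^ r ≤ (u + v) ^ r := by
    have h := ENNReal.rpow_add_rpow_le_add u v hr
    calc u ^ r + v ^ r = ((u ^ r + v ^ r) ^ (1 / r)) ^ r := by
          rw [← ENNReal.rpow_mul, one_div, inv_mul_cancel₀ hr0.ne', ENNReal.rpow_one]
      _ ≤ (u + v) ^ r := ENNReal.rpow_le_rpow h hr0.le
  have h2 : 2 * (u + v) ^ r ≤ U ^ r + V ^ r := by
    have hm := ENNReal.rpow_arith_mean_le_arith_mean2_rpow (1/2) (1/2) U V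
      (ENNReal.add_halves 1) hr
    have hUV2 : (1/2 : ℝ≥0∞) * U + (1/2) * V = u + v := by
      simp only [div_eq_mul_inv, one_mul]
      rw [← mul_add, hUV, ← mul_assoc, ENNReal.inv_mul_cancel (by norm_num) (by norm_num),
        one_mul]
    rw [hUV2] at hm
    calc 2 * (u + v) ^ r ≤ 2 * (1/2 * U ^ r + 1/2 * V ^ r) :=
          mul_le_mul_right hm 2
      _ = U ^ r + V ^ r := by
          rw [mul_add, ← mul_assoc, ← mul_assoc, div_eq_mul_inv, one_mul,
            ENNReal.mul_inv_cancel (by norm_num) (by norm_num), one_mul, one_mul]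
  exact le_trans (mul_le_mul_right h1 2) h2

lemma my_abs_rpow_eq {p : ℝ} (a : ℝ) : |a| ^ p = (a ^ 2) ^ (p / 2) := by
  rw [← sq_abs, ← Real.rpow_natCast |a| 2, ← Real.rpow_mul (abs_nonneg a)]
  congr 1
  push_cast
  ring

lemma my_nnnorm_rpow_eq {p : ℝ} (hp : 0 ≤ p) (a : ℝ) :
    (‖a‖₊ : ℝ≥0∞) ^ p = ENNReal.ofReal (a ^ 2) ^ (p / 2) := by
  rw [← ENNReal.ofReal_coe_nnreal, coe_nnnorm, Real.norm_eq_abs,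
    ENNReal.ofReal_rpow_of_nonneg (abs_nonneg a) hp, my_abs_rpow_eq,
    ENNReal.ofReal_rpow_of_nonneg (sq_nonneg a) (by positivity)]

lemma my_pointwise_clarkson {p : ℝ} (hp : 2 ≤ p) (a b : ℝ) :
    2 * ((‖a‖₊ : ℝ≥0∞) ^ p + (‖b‖₊ : ℝ≥0∞) ^ p)
      ≤ (‖a + b‖₊ : ℝ≥0∞) ^ p + (‖a - b‖₊ : ℝ≥0∞) ^ p := by
  have hp0 : (0:ℝ) ≤ p := by linarith
  rw [my_nnnorm_rpow_eq hp0 a, my_nnnorm_rpow_eq hp0 b, my_nnnorm_rpow_eq hp0 (a+b),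
    my_nnnorm_rpow_eq hp0 (a-b)]
  refine my_key_pt (by linarith) _ _ _ _ ?_
  rw [← ENNReal.ofReal_add (sq_nonneg _) (sq_nonneg _),
    ← ENNReal.ofReal_add (sq_nonneg _) (sq_nonneg _)]
  rw [show (2:ℝ≥0∞) = ENNReal.ofReal (2:ℝ) by norm_num, ← ENNReal.ofReal_mul (by norm_num)]
  congr 1
  ring

section LpLemmas
variable {X : Type*} [MeasurableSpace X] {μ : MeasureTheory.Measure X}

lemma my_ofReal_norm_rpow {p : ℝ} (hp : 0 < p) [Fact (1 ≤ ENNReal.ofReal p)]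
    (f : Lp ℝ (ENNReal.ofReal p) μ) :
    ENNReal.ofReal ‖f‖ ^ p = ∫⁻ x, (‖f x‖₊ : ℝ≥0∞) ^ p ∂μ := by
  have hne : ENNReal.ofReal p ≠ 0 := by
    simp [ENNReal.ofReal_eq_zero, not_le, hp]
  rw [Lp.norm_def, ENNReal.ofReal_toReal (Lp.eLpNorm_ne_top f),
    eLpNorm_eq_lintegral_rpow_enorm_toReal hne ENNReal.ofReal_ne_top,
    ENNReal.toReal_ofReal hp.le, ← ENNReal.rpow_mul, one_div,
    inv_mul_cancel₀ hp.ne', ENNReal.rpow_one]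
  rfl

lemma my_Lp_clarkson {p : ℝ} (hp : 2 ≤ p) [Fact (1 ≤ ENNReal.ofReal p)]
    (f g : Lp ℝ (ENNReal.ofReal p) μ) :
    2 * (ENNReal.ofReal ‖f‖ ^ p + ENNReal.ofReal ‖g‖ ^ p)
      ≤ ENNReal.ofReal ‖f + g‖ ^ p + ENNReal.ofReal ‖f - g‖ ^ p := by
  have hp0 : (0:ℝ) < p := by linarith
  have hmf : AEMeasurable (fun x => (‖f x‖₊ : ℝ≥0∞) ^ p) μ :=
    (Lp.aestronglyMeasurable f).enorm.pow aemeasurable_const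
  have hmfg : AEMeasurable (fun x => (‖f x + g x‖₊ : ℝ≥0∞) ^ p) μ :=
    (((Lp.aestronglyMeasurable f).add (Lp.aestronglyMeasurable g)).enorm.pow
      aemeasurable_const)
  have e1 : ENNReal.ofReal ‖f + g‖ ^ p = ∫⁻ x, (‖f x + g x‖₊ : ℝ≥0∞) ^ p ∂μ := by
    rw [my_ofReal_norm_rpow hp0]
    refine lintegral_congr_ae ((Lp.coeFn_add f g).mono fun x hx => ?_)
    simp only []
    rw [hx, Pi.add_apply]
  have e2 : ENNReal.ofReal ‖f - g‖ ^ p = ∫⁻ x, (‖f x - g x‖₊ : ℝ≥0∞) ^ p ∂μ := by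
    rw [my_ofReal_norm_rpow hp0]
    refine lintegral_congr_ae ((Lp.coeFn_sub f g).mono fun x hx => ?_)
    simp only []
    rw [hx, Pi.sub_apply]
  rw [e1, e2, my_ofReal_norm_rpow hp0 f, my_ofReal_norm_rpow hp0 g,
    ← lintegral_add_left' hmf, ← lintegral_const_mul' 2 _ (by norm_num),
    ← lintegral_add_left' hmfg]
  exact lintegral_mono fun x => my_pointwise_clarkson hp (f x) (g x)

lemma my_sign_lemma {p : ℝ} (hp : 2 ≤ p) [Fact (1 ≤ ENNReal.ofReal p)]
    {ι : Type*} [DecidableEq ι] (G : Finset ι)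
    (g : ι → Lp ℝ (ENNReal.ofReal p) μ) (h : Lp ℝ (ENNReal.ofReal p) μ) :
    ∃ ε : ι → ℝ, (∀ i, ε i = 1 ∨ ε i = -1) ∧
      ENNReal.ofReal ‖h‖ ^ p + ∑ i ∈ G, ENNReal.ofReal ‖g i‖ ^ p
        ≤ ENNReal.ofReal ‖h + ∑ i ∈ G, ε i • g i‖ ^ p := by
  classical
  induction G using Finset.induction_on with
  | empty => exact ⟨fun _ => 1, fun _ => Or.inl rfl, by simp⟩
  | @insert a s ha ih =>
    obtain ⟨ε, hε, hle⟩ := ih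
    set h' : Lp ℝ (ENNReal.ofReal p) μ := h + ∑ i ∈ s, ε i • g i with hh'
    have hcl := my_Lp_clarkson hp h' (g a)
    have hmax : ENNReal.ofReal ‖h'‖ ^ p + ENNReal.ofReal ‖g a‖ ^ p
        ≤ max (ENNReal.ofReal ‖h' + g a‖ ^ p) (ENNReal.ofReal ‖h' - g a‖ ^ p) := by
      by_contra hcon
      push_neg at hcon
      have : ENNReal.ofReal ‖h' + g a‖ ^ p + ENNReal.ofReal ‖h' - g a‖ ^ p
          < 2 * (ENNReal.ofReal ‖h'‖ ^ p + ENNReal.ofReal ‖g a‖ ^ p) := by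
        have l1 := lt_of_le_of_lt (le_max_left _ (ENNReal.ofReal ‖h' - g a‖ ^ p)) hcon
        have l2 := lt_of_le_of_lt (le_max_right (ENNReal.ofReal ‖h' + g a‖ ^ p) _) hcon
        calc ENNReal.ofReal ‖h' + g a‖ ^ p + ENNReal.ofReal ‖h' - g a‖ ^ p
            < _ + _ := ENNReal.add_lt_add l1 l2
          _ = 2 * (ENNReal.ofReal ‖h'‖ ^ p + ENNReal.ofReal ‖g a‖ ^ p) := (two_mul _).symm
      exact absurd hcl (not_le.mpr this)
    have key : ∃ σ : ℝ, (σ = 1 ∨ σ = -1) ∧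
        ENNReal.ofReal ‖h'‖ ^ p + ENNReal.ofReal ‖g a‖ ^ p
          ≤ ENNReal.ofReal ‖h' + σ • g a‖ ^ p := by
      rcases max_cases (ENNReal.ofReal ‖h' + g a‖ ^ p) (ENNReal.ofReal ‖h' - g a‖ ^ p) with
        ⟨hm, _⟩ | ⟨hm, _⟩
      · exact ⟨1, Or.inl rfl, by rw [one_smul]; rw [hm] at hmax; exact hmax⟩
      · refine ⟨-1, Or.inr rfl, ?_⟩
        rw [neg_smul, one_smul, ← sub_eq_add_neg]
        rw [hm] at hmax; exact hmax
    obtain ⟨σ, hσ, hσle⟩ := key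
    refine ⟨Function.update ε a σ, ?_, ?_⟩
    · intro i
      rcases eq_or_ne i a with rfl | hia
      · simpa using hσ
      · simpa [Function.update_of_ne hia] using hε i
    · have hsum : ∑ i ∈ insert a s, Function.update ε a σ i • g i
          = σ • g a + ∑ i ∈ s, ε i • g i := by
        rw [Finset.sum_insert ha, Function.update_self]
        congr 1
        exact Finset.sum_congr rfl fun i hi =>
          by rw [Function.update_of_ne (by rintro rfl; exact ha hi)]
      rw [hsum, Finset.sum_insert ha]
      calc ENNReal.ofReal ‖h‖ ^ p
            + (ENNReal.ofReal ‖g a‖ ^ p + ∑ i ∈ s, ENNReal.ofReal ‖g i‖ ^ p)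
          = (ENNReal.ofReal ‖h‖ ^ p + ∑ i ∈ s, ENNReal.ofReal ‖g i‖ ^ p)
            + ENNReal.ofReal ‖g a‖ ^ p := by ring
        _ ≤ ENNReal.ofReal ‖h'‖ ^ p + ENNReal.ofReal ‖g a‖ ^ p := add_le_add_left hle _
        _ ≤ ENNReal.ofReal ‖h' + σ • g a‖ ^ p := hσle
        _ = ENNReal.ofReal ‖h + (σ • g a + ∑ i ∈ s, ε i • g i)‖ ^ p := by
            rw [hh']
            congr 2
            abel

end LpLemmas

lemma my_indicator_sq_le (s : Set α) (x : α → ℝ) (j : α) :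
    (s.indicator x j) ^ 2 ≤ x j ^ 2 := by
  by_cases h : j ∈ s
  · rw [Set.indicator_of_mem h]
  · rw [Set.indicator_of_notMem h]
    simpa using sq_nonneg (x j)

lemma my_R_sum {A : Type*} (p : ℝ) (𝒞 : Set (PWPair A)) {E : Type*} [AddCommGroup E]
    (R : (A → ℝ) → E)
    (hadd : ∀ x y, famNorm p 𝒞 x < ⊤ → famNorm p 𝒞 y < ⊤ → R (x + y) = R x + R y)
    {ι : Type*} [DecidableEq ι] (G : Finset ι) (y : ι → A → ℝ) (z : A → ℝ)
    (hfin : ∀ s ⊆ G, famNorm p 𝒞 (z + ∑ i ∈ s, y i) < ⊤)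
    (hy : ∀ i ∈ G, famNorm p 𝒞 (y i) < ⊤) :
    R (z + ∑ i ∈ G, y i) = R z + ∑ i ∈ G, R (y i) := by
  induction G using Finset.induction_on with
  | empty => simp
  | @insert a s ha ih =>
    have h1 : z + ∑ i ∈ insert a s, y i = (z + ∑ i ∈ s, y i) + y a := by
      rw [Finset.sum_insert ha]; abel
    rw [h1, hadd _ _ (hfin s (Finset.subset_insert a s)) (hy a (Finset.mem_insert_self a s)),
      ih (fun s' hs' => hfin s' (hs'.trans (Finset.subset_insert a s)))
        (fun i hi => hy i (Finset.mem_insert_of_mem hi)),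
      Finset.sum_insert ha]
    abel

/-- (Lower estimate.) Let `p > 2`, let `𝒞` be a family of
partition–weight pairs on a countable set `A` and `X = X(𝒞)`.  If `R : X → L_p([0,1])`
is a bounded (by `M`) linear map with `‖Rx‖ ≥ c₀ ‖x‖_X`, then there is a constant
`C > 0`, depending only on `M / c₀`, such that for every partition `Q` of `A` and every
`T : Q → 𝒞`, `‖x‖_X ≥ C ‖x‖_{P(Q,T),W(Q,T)}` for all `x ∈ X`. -/
theorem statement9 {A : Type*} [Countable A] (p : ℝ) (hp : 2 < p)
    [Fact (1 ≤ ENNReal.ofReal p)]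
    (𝒞 : Set (PWPair A)) (h𝒞 : IsPWFamily 𝒞)
    (R : (A → ℝ) → MeasureTheory.Lp ℝ (ENNReal.ofReal p)
      (volume : Measure ↥(Set.Icc (0 : ℝ) 1)))
    (M c₀ : ℝ) (hc₀ : 0 < c₀)
    (hadd : ∀ x y, famNorm p 𝒞 x < ⊤ → famNorm p 𝒞 y < ⊤ → R (x + y) = R x + R y)
    (hsmul : ∀ (r : ℝ) (x), famNorm p 𝒞 x < ⊤ → R (r • x) = r • R x)
    (hub : ∀ x, famNorm p 𝒞 x < ⊤ →
      ENNReal.ofReal ‖R x‖ ≤ ENNReal.ofReal M * famNorm p 𝒞 x)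
    (hlb : ∀ x, famNorm p 𝒞 x < ⊤ →
      ENNReal.ofReal c₀ * famNorm p 𝒞 x ≤ ENNReal.ofReal ‖R x‖) :
    ∃ C : ℝ, 0 < C ∧
      ∀ Q : Set (Set A), IsPartition Q → ∀ T : Set A → PWPair A, (∀ q ∈ Q, T q ∈ 𝒞) →
        ∀ x : A → ℝ, famNorm p 𝒞 x < ⊤ →
          ENNReal.ofReal C * pwNorm p (envPartition Q T) (envWeight Q T) x
            ≤ famNorm p 𝒞 x := by
  classical
  have hp0 : (0:ℝ) < p := by linarith
  have hM' : (0:ℝ) < max M c₀ := lt_of_lt_of_le hc₀ (le_max_right M c₀)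
  refine ⟨c₀ / max M c₀, div_pos hc₀ hM', ?_⟩
  intro Q hQ T hT x hx
  set F : (A → ℝ) → ℝ≥0∞ := famNorm p 𝒞 with hF
  -- finiteness of indicators
  have hfin_ind : ∀ s : Set A, F (s.indicator x) < ⊤ :=
    fun s => lt_of_le_of_lt (my_famNorm_mono_sq hp0 𝒞 (my_indicator_sq_le s x)) hx
  -- Step 1 : finite-block estimate
  have step1 : ∀ G : Finset (Set A), ↑G ⊆ Q →
      ENNReal.ofReal c₀ ^ p * ∑ q ∈ G, F (q.indicator x) ^ p
        ≤ ENNReal.ofReal M ^ p * F x ^ p := by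
    intro G hGQ
    set c : Set A := (⋃₀ (G : Set (Set A)))ᶜ with hc
    obtain ⟨ε, hε, hkey⟩ := my_sign_lemma hp.le G (fun q => R (q.indicator x))
      (R (c.indicator x))
    have hε2 : ∀ q, ε q ^ 2 = 1 := by
      intro q; rcases hε q with h | h <;> rw [h] <;> norm_num
    -- pointwise values of the signed sum
    have hval : ∀ s : Finset (Set A), s ⊆ G → ∀ j : A,
        ((c.indicator x + ∑ q ∈ s, ε q • q.indicator x) j) ^ 2 ≤ x j ^ 2 ∧
        (s = G → ((c.indicator x + ∑ q ∈ s, ε q • q.indicator x) j) ^ 2 = x j ^ 2) := by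
      intro s hs j
      simp only [Pi.add_apply, Finset.sum_apply, Pi.smul_apply, smul_eq_mul]
      by_cases hj : j ∈ ⋃₀ (G : Set (Set A))
      · obtain ⟨q₀, hq₀G, hjq₀⟩ := hj
        have hq₀G' : q₀ ∈ G := hq₀G
        have hjU : j ∈ ⋃₀ (G : Set (Set A)) := ⟨q₀, hq₀G, hjq₀⟩
        have hz : c.indicator x j = 0 := Set.indicator_of_notMem (Set.notMem_compl_iff.mpr hjU) x
        have hterm : ∀ q ∈ s, ε q * q.indicator x j
            = if q = q₀ then ε q₀ * x j else 0 := by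
          intro q hq
          rcases eq_or_ne q q₀ with rfl | hne
          · simp [Set.indicator_of_mem hjq₀]
          · have hq' : j ∉ q := fun hjq =>
              hne (hQ.eq_of_mem' (hGQ (hs hq)) (hGQ hq₀G') hjq hjq₀)
            simp [Set.indicator_of_notMem hq', hne]
        rw [Finset.sum_congr rfl hterm, Finset.sum_ite_eq' s q₀ (fun _ => ε q₀ * x j), hz,
          zero_add]
        constructor
        · by_cases hq₀s : q₀ ∈ s
          · rw [if_pos hq₀s, mul_pow, hε2, one_mul]
          · rw [if_neg hq₀s]
            simpa using sq_nonneg (x j)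
        · rintro rfl
          rw [if_pos hq₀G', mul_pow, hε2, one_mul]
      · have hz : c.indicator x j = x j := Set.indicator_of_mem (Set.mem_compl hj) x
        have hterm0 : ∀ q ∈ s, ε q * q.indicator x j = 0 := by
          intro q hq
          have hjq : j ∉ q := fun hjq => hj ⟨q, hs hq, hjq⟩
          simp [Set.indicator_of_notMem hjq]
        rw [Finset.sum_congr rfl hterm0, Finset.sum_const_zero, add_zero, hz]
        exact ⟨le_rfl, fun _ => rfl⟩
    -- finiteness facts
    have hfinz : F (c.indicator x) < ⊤ := hfin_ind c
    have hyfin : ∀ q ∈ G, F (ε q • q.indicator x) < ⊤ := by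
      intro q hq
      refine lt_of_le_of_lt (my_famNorm_mono_sq hp0 𝒞 fun j => ?_) hx
      have : (ε q • q.indicator x) j ^ 2 = (q.indicator x j) ^ 2 := by
        simp only [Pi.smul_apply, smul_eq_mul, mul_pow, hε2, one_mul]
      rw [this]
      exact my_indicator_sq_le q x j
    have hparts : ∀ s ⊆ G, F (c.indicator x + ∑ q ∈ s, ε q • q.indicator x) < ⊤ := by
      intro s hs
      exact lt_of_le_of_lt (my_famNorm_mono_sq hp0 𝒞 fun j => (hval s hs j).1) hx
    set xε : A → ℝ := c.indicator x + ∑ q ∈ G, ε q • q.indicator x with hxε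
    have hfeq : F xε = F x :=
      my_famNorm_congr_sq hp0 𝒞 fun j => (hval G le_rfl j).2 rfl
    have hfinxε : F xε < ⊤ := by rw [hfeq]; exact hx
    -- linearity
    have hR : R xε = R (c.indicator x) + ∑ q ∈ G, ε q • R (q.indicator x) := by
      rw [hxε, my_R_sum p 𝒞 R hadd G _ _ hparts hyfin]
      congr 1
      exact Finset.sum_congr rfl fun q _ => hsmul (ε q) (q.indicator x) (hfin_ind q)
    rw [← hR] at hkey
    -- upper bound for ‖R xε‖
    have hup : ENNReal.ofReal ‖R xε‖ ^ p ≤ ENNReal.ofReal M ^ p * F x ^ p := by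
      have h1 := hub xε hfinxε
      rw [hfeq] at h1
      calc ENNReal.ofReal ‖R xε‖ ^ p ≤ (ENNReal.ofReal M * F x) ^ p :=
            ENNReal.rpow_le_rpow h1 hp0.le
        _ = ENNReal.ofReal M ^ p * F x ^ p := ENNReal.mul_rpow_of_nonneg _ _ hp0.le
    -- lower bound per block
    have hlow : ∀ q ∈ G, ENNReal.ofReal c₀ ^ p * F (q.indicator x) ^ p
        ≤ ENNReal.ofReal ‖R (q.indicator x)‖ ^ p := by
      intro q _
      calc ENNReal.ofReal c₀ ^ p * F (q.indicator x) ^ p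
          = (ENNReal.ofReal c₀ * F (q.indicator x)) ^ p :=
            (ENNReal.mul_rpow_of_nonneg _ _ hp0.le).symm
        _ ≤ ENNReal.ofReal ‖R (q.indicator x)‖ ^ p :=
            ENNReal.rpow_le_rpow (hlb _ (hfin_ind q)) hp0.le
    calc ENNReal.ofReal c₀ ^ p * ∑ q ∈ G, F (q.indicator x) ^ p
        = ∑ q ∈ G, ENNReal.ofReal c₀ ^ p * F (q.indicator x) ^ p := Finset.mul_sum _ _ _
      _ ≤ ∑ q ∈ G, ENNReal.ofReal ‖R (q.indicator x)‖ ^ p := Finset.sum_le_sum hlow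
      _ ≤ ENNReal.ofReal ‖R (c.indicator x)‖ ^ p
            + ∑ q ∈ G, ENNReal.ofReal ‖R (q.indicator x)‖ ^ p := le_add_self
      _ ≤ ENNReal.ofReal ‖R xε‖ ^ p := hkey
      _ ≤ ENNReal.ofReal M ^ p * F x ^ p := hup
  -- Step 2 : countable-block estimate
  have step2 : ENNReal.ofReal c₀ ^ p * ∑' q : Q, F ((q : Set A).indicator x) ^ p
      ≤ ENNReal.ofReal M ^ p * F x ^ p := by
    rw [ENNReal.tsum_eq_iSup_sum, ENNReal.mul_iSup]
    refine iSup_le fun s => ?_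
    have him : ∑ q ∈ s.image Subtype.val, F (q.indicator x) ^ p
        = ∑ q ∈ s, F ((q : Set A).indicator x) ^ p :=
      Finset.sum_image (fun a _ b _ h => Subtype.val_injective h)
    rw [← him]
    refine step1 _ ?_
    intro q hq
    simp only [Finset.coe_image, Set.mem_image, Finset.mem_coe] at hq
    obtain ⟨q', _, rfl⟩ := hq
    exact q'.2
  -- Step 3 : envelope norm is dominated by the block sums
  have step3 : pwNorm p (envPartition Q T) (envWeight Q T) x ^ p
      ≤ ∑' q : Q, F ((q : Set A).indicator x) ^ p := by
    rw [my_pwNorm_rpow hp0]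
    have hch : ∀ K : envPartition Q T,
        ∃ i : Σ q : Q, ((T (q : Set A)).1 : Set (Set A)),
          (K : Set A) = (i.1 : Set A) ∩ (i.2 : Set A) := by
      rintro ⟨K, hKne, q, hqQ, s, hsT, rfl⟩
      exact ⟨⟨⟨q, hqQ⟩, ⟨s, hsT⟩⟩, rfl⟩
    choose e he using hch
    have einj : Function.Injective e := by
      intro K K' hKK'
      apply Subtype.ext
      rw [he K, he K', hKK']
    have hstep : ∑' K : envPartition Q T,
        (∑' j : (K : Set A), ENNReal.ofReal (x j ^ 2 * envWeight Q T j ^ 2)) ^ (p / 2)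
        ≤ ∑' i : Σ q : Q, ((T (q : Set A)).1 : Set (Set A)),
            (∑' j : (i.2 : Set A),
              ENNReal.ofReal (((i.1 : Set A).indicator x) j ^ 2
                * ((T (i.1 : Set A)).2 j) ^ 2)) ^ (p / 2) := by
      refine Summable.tsum_le_tsum_of_inj e einj (fun _ _ => zero_le) (fun K => ?_)
        ENNReal.summable ENNReal.summable
      refine ENNReal.rpow_le_rpow ?_ (by positivity)
      have hsub : (K : Set A) ⊆ ((e K).2 : Set A) := by
        rw [he K]; exact Set.inter_subset_right
      refine Summable.tsum_le_tsum_of_inj (Set.inclusion hsub) (Set.inclusion_injective hsub)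
        (fun _ _ => zero_le) (fun j => ?_) ENNReal.summable ENNReal.summable
      have hsubq : (K : Set A) ⊆ ((e K).1 : Set A) := by
        rw [he K]; exact Set.inter_subset_left
      have hjq : (j : A) ∈ ((e K).1 : Set A) := hsubq j.2
      simp only [Set.coe_inclusion]
      rw [Set.indicator_of_mem hjq]
      simp only [envWeight]
      rw [my_blockOf_eq hQ (e K).1.2 hjq]
    refine le_trans hstep ?_
    rw [ENNReal.tsum_sigma']
    refine ENNReal.tsum_le_tsum fun q => ?_
    have hpw : ∑' s : ((T (q : Set A)).1 : Set (Set A)),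
        (∑' j : (s : Set A),
          ENNReal.ofReal (((q : Set A).indicator x) j ^ 2
            * ((T (q : Set A)).2 j) ^ 2)) ^ (p / 2)
        = pwNorm p (T (q : Set A)).1 (T (q : Set A)).2 ((q : Set A).indicator x) ^ p :=
      (my_pwNorm_rpow hp0 _ _ _).symm
    rw [hpw]
    exact ENNReal.rpow_le_rpow
      (my_pwNorm_le_famNorm (hT (q : Set A) q.2) ((q : Set A).indicator x)) hp0.le
  -- combine
  have main : ENNReal.ofReal c₀ ^ p * pwNorm p (envPartition Q T) (envWeight Q T) x ^ p
      ≤ ENNReal.ofReal (max M c₀) ^ p * F x ^ p := by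
    calc ENNReal.ofReal c₀ ^ p * pwNorm p (envPartition Q T) (envWeight Q T) x ^ p
        ≤ ENNReal.ofReal c₀ ^ p * ∑' q : Q, F ((q : Set A).indicator x) ^ p :=
          mul_le_mul_right step3 _
      _ ≤ ENNReal.ofReal M ^ p * F x ^ p := step2
      _ ≤ ENNReal.ofReal (max M c₀) ^ p * F x ^ p :=
          mul_le_mul_left (ENNReal.rpow_le_rpow
            (ENNReal.ofReal_le_ofReal (le_max_left M c₀)) hp0.le) _
  have cancel : ∀ a : ℝ≥0∞, (a ^ p) ^ (1/p) = a := fun a => by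
    rw [← ENNReal.rpow_mul, mul_one_div, div_self hp0.ne', ENNReal.rpow_one]
  have hroot : ENNReal.ofReal c₀ * pwNorm p (envPartition Q T) (envWeight Q T) x
      ≤ ENNReal.ofReal (max M c₀) * F x := by
    have := ENNReal.rpow_le_rpow main (by positivity : (0:ℝ) ≤ 1/p)
    rwa [ENNReal.mul_rpow_of_nonneg _ _ (by positivity : (0:ℝ) ≤ 1/p),
      ENNReal.mul_rpow_of_nonneg _ _ (by positivity : (0:ℝ) ≤ 1/p),
      cancel, cancel, cancel, cancel] at this
  calc ENNReal.ofReal (c₀ / max M c₀) * pwNorm p (envPartition Q T) (envWeight Q T) x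
      = ENNReal.ofReal (1 / max M c₀)
        * (ENNReal.ofReal c₀ * pwNorm p (envPartition Q T) (envWeight Q T) x) := by
        rw [← mul_assoc, ← ENNReal.ofReal_mul (by positivity)]
        congr 2
        field_simp
    _ ≤ ENNReal.ofReal (1 / max M c₀) * (ENNReal.ofReal (max M c₀) * F x) :=
        mul_le_mul_right hroot _
    _ = F x := by
        rw [← mul_assoc, ← ENNReal.ofReal_mul (by positivity),
          one_div_mul_cancel hM'.ne', ENNReal.ofReal_one, one_mul]
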